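/- Let α ∈ K be a normal element, let b_0, …, b_{n-1} be an F-basis of K, and let X be a finite subset of F. Then the number of tuples (x_0, …, x_{n-1}) ∈ X^n such that the F-linear form ℓ : K → F determined by ℓ(b_k) = x_k for all k makes s_{α,ℓ} := Σ_{g ∈ G} ℓ(g(α))·g a non-unit in F[G] is at most n·|X|^{n-1}. -/

import Mathlib

open Classical Finset MvPolynomial in
lemma card_filter_piFinset_succ {F : Type*} [Field F] {n : ℕ} (X : Finset F)
    (p : (Fin (n+1) → F) → Prop) :
    ((Fintype.piFinset fun _ : Fin (n+1) => X).filter p).card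
      = ∑ y ∈ Fintype.piFinset (fun _ : Fin n => X),
          (X.filter fun t => p (Fin.cons t y)).card := by
  rw [Finset.card_eq_sum_card_fiberwise
    (f := fun x => Fin.tail x) (t := Fintype.piFinset fun _ : Fin n => X)
    (fun x (hx : x ∈ (Fintype.piFinset fun _ : Fin (n+1) => X).filter p) => by
      simp only [Finset.mem_coe, Finset.mem_filter, Fintype.mem_piFinset] at hx ⊢
      exact fun i => hx.1 _)]
  refine Finset.sum_congr rfl fun y hy => ?_
  refine (Finset.card_bij' (fun x _ => x 0) (fun t _ => Fin.cons t y) ?_ ?_ ?_ ?_).symm.symm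
  · intro x hx
    simp only [Finset.mem_filter, Fintype.mem_piFinset] at hx ⊢
    obtain ⟨⟨h1, h2⟩, h3⟩ := hx
    have heq : Fin.cons (x 0) y = x := by rw [← h3, Fin.cons_self_tail]
    exact ⟨h1 0, by rwa [heq]⟩
  · intro t ht
    simp only [Finset.mem_filter, Fintype.mem_piFinset] at ht ⊢
    refine ⟨⟨fun i => ?_, ht.2⟩, by simp [Fin.tail_cons]⟩
    rcases Fin.eq_zero_or_eq_succ i with rfl | ⟨j, rfl⟩
    · simpa using ht.1
    · simp only [Fin.cons_succ]
      exact (Fintype.mem_piFinset.mp hy) j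
  · intro x hx
    simp only [Finset.mem_filter] at hx
    show Fin.cons (x 0) y = x
    rw [← hx.2]
    exact Fin.cons_self_tail x
  · intro t ht
    simp

open Classical Finset MvPolynomial Polynomial in
lemma schwartz_zippel {F : Type*} [Field F] :
    ∀ (n : ℕ) (P : MvPolynomial (Fin n) F), P ≠ 0 → ∀ (X : Finset F),
    ((Fintype.piFinset fun _ : Fin n => X).filter
        fun x => MvPolynomial.eval x P = 0).card * X.card
      ≤ P.totalDegree * X.card ^ n := by
  intro n
  induction n with
  | zero =>
    intro P hP X
    have hne : ∀ x : Fin 0 → F, MvPolynomial.eval x P ≠ 0 := by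
      intro x
      obtain ⟨c, rfl⟩ := MvPolynomial.C_surjective (Fin 0) P
      simpa using fun h => hP (by rw [h, map_zero])
    rw [Finset.filter_false_of_mem (fun x _ => hne x)]
    simp
  | succ n ih =>
    intro P hP X
    set Q := MvPolynomial.finSuccEquiv F n P with hQdef
    have hQ : Q ≠ 0 := fun h =>
      hP ((map_eq_zero_iff (MvPolynomial.finSuccEquiv F n)
        (AlgEquiv.injective _)).mp h)
    set d := Q.natDegree with hd
    set c := Q.coeff d with hc
    have hcne : c ≠ 0 := Polynomial.leadingCoeff_ne_zero.mpr hQ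
    have hdeg : c.totalDegree + d ≤ P.totalDegree :=
      MvPolynomial.totalDegree_coeff_finSuccEquiv_add_le P d hcne
    rw [card_filter_piFinset_succ]
    have key : ∀ y ∈ Fintype.piFinset (fun _ : Fin n => X),
        (X.filter fun t => MvPolynomial.eval (Fin.cons t y) P = 0).card
          ≤ if MvPolynomial.eval y c = 0 then X.card else d := by
      intro y _
      split_ifs with hcy
      · exact Finset.card_filter_le _ _
      · set q : Polynomial F := Q.map (MvPolynomial.eval y) with hq
        have hqne : q ≠ 0 := fun h => hcy (by
          have h2 := congrArg (fun r => Polynomial.coeff r d) h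
          simpa [hq, Polynomial.coeff_map] using h2)
        have hsub : (X.filter fun t => MvPolynomial.eval (Fin.cons t y) P = 0)
            ⊆ q.roots.toFinset := by
          intro t ht
          simp only [Finset.mem_filter] at ht
          rw [Multiset.mem_toFinset, Polynomial.mem_roots hqne]
          show q.eval t = 0
          rw [hq, ← MvPolynomial.eval_eq_eval_mv_eval']
          exact ht.2
        calc (X.filter fun t => MvPolynomial.eval (Fin.cons t y) P = 0).card
            ≤ q.roots.toFinset.card := Finset.card_le_card hsub
          _ ≤ Multiset.card q.roots := Multiset.toFinset_card_le _
          _ ≤ q.natDegree := Polynomial.card_roots' q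
          _ ≤ d := Polynomial.natDegree_map_le
    set Nc := ((Fintype.piFinset fun _ : Fin n => X).filter
      fun y => MvPolynomial.eval y c = 0).card with hNcdef
    have hNc : Nc * X.card ≤ c.totalDegree * X.card ^ n := ih c hcne X
    have h1 : (∑ y ∈ Fintype.piFinset (fun _ : Fin n => X),
        (X.filter fun t => MvPolynomial.eval (Fin.cons t y) P = 0).card)
          ≤ Nc * X.card + X.card ^ n * d := by
      calc _ ≤ ∑ y ∈ Fintype.piFinset (fun _ : Fin n => X),
            (if MvPolynomial.eval y c = 0 then X.card else d) :=
          Finset.sum_le_sum key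
        _ = Nc * X.card + ((Fintype.piFinset fun _ : Fin n => X).filter
              fun y => ¬ MvPolynomial.eval y c = 0).card * d := by
            rw [Finset.sum_ite, Finset.sum_const, Finset.sum_const]
            simp [hNcdef, mul_comm]
        _ ≤ Nc * X.card + X.card ^ n * d := by
            gcongr
            calc ((Fintype.piFinset fun _ : Fin n => X).filter
                  fun y => ¬ MvPolynomial.eval y c = 0).card
                ≤ (Fintype.piFinset fun _ : Fin n => X).card :=
                  Finset.card_filter_le _ _
              _ = X.card ^ n := by
                  simp [Fintype.card_piFinset, Finset.prod_const]
    calc _ ≤ (Nc * X.card + X.card ^ n * d) * X.card :=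
        Nat.mul_le_mul_right _ h1
      _ = Nc * X.card * X.card + d * (X.card ^ n * X.card) := by ring
      _ ≤ c.totalDegree * X.card ^ n * X.card + d * (X.card ^ n * X.card) := by
          gcongr
      _ = (c.totalDegree + d) * X.card ^ (n + 1) := by ring
      _ ≤ P.totalDegree * X.card ^ (n + 1) := Nat.mul_le_mul_right _ hdeg

lemma isUnit_iff_det_ne_zero {F A ι : Type*} [Field F] [Ring A] [Algebra F A]
    [Fintype ι] [DecidableEq ι] (β : Module.Basis ι F A) (s : A) :
    IsUnit s ↔ (LinearMap.toMatrix β β (LinearMap.mulLeft F s)).det ≠ 0 := by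
  constructor
  · rintro ⟨u, rfl⟩
    have h1 : LinearMap.toMatrix β β (LinearMap.mulLeft F (u : A)) *
        LinearMap.toMatrix β β (LinearMap.mulLeft F ((u⁻¹ : Aˣ) : A)) = 1 := by
      rw [← LinearMap.toMatrix_comp β β β, ← LinearMap.mulLeft_mul]
      simp [LinearMap.toMatrix_id]
    intro h
    have := congrArg Matrix.det h1
    rw [Matrix.det_mul, h, zero_mul] at this
    simp at this
  · intro h
    have hM : IsUnit (LinearMap.toMatrix β β (LinearMap.mulLeft F s)) :=
      (Matrix.isUnit_iff_isUnit_det _).mpr (isUnit_iff_ne_zero.mpr h)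
    obtain ⟨U, hU⟩ := hM
    have hfU : LinearMap.mulLeft F s = Matrix.toLin β β (U : Matrix ι ι F) := by
      rw [hU, Matrix.toLin_toMatrix]
    have hdet : IsUnit (U : Matrix ι ι F).det :=
      (Matrix.isUnit_iff_isUnit_det _).mp U.isUnit
    have hgf : Matrix.toLin β β ((U⁻¹ : (Matrix ι ι F)ˣ) : Matrix ι ι F) ∘ₗ
        Matrix.toLin β β (U : Matrix ι ι F) = LinearMap.id := by
      rw [← Matrix.toLin_mul]
      simp [Matrix.toLin_one, Matrix.nonsing_inv_mul _ hdet,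
        Matrix.mul_nonsing_inv _ hdet]
    have hfg : Matrix.toLin β β (U : Matrix ι ι F) ∘ₗ
        Matrix.toLin β β ((U⁻¹ : (Matrix ι ι F)ˣ) : Matrix ι ι F) = LinearMap.id := by
      rw [← Matrix.toLin_mul]
      simp [Matrix.toLin_one, Matrix.nonsing_inv_mul _ hdet,
        Matrix.mul_nonsing_inv _ hdet]
    have hbij : Function.Bijective (LinearMap.mulLeft F s) := by
      rw [hfU]
      exact Function.bijective_iff_has_inverse.mpr
        ⟨Matrix.toLin β β ((U⁻¹ : (Matrix ι ι F)ˣ) : Matrix ι ι F),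
         fun x => LinearMap.congr_fun hgf x, fun x => LinearMap.congr_fun hfg x⟩
    obtain ⟨t, ht⟩ := hbij.2 1
    rw [LinearMap.mulLeft_apply] at ht
    have hts : t * s = 1 := by
      have : s * (t * s) = s * 1 := by rw [← mul_assoc, ht, one_mul, mul_one]
      have h2 := hbij.1 (a₁ := t * s) (a₂ := 1) (by
        simpa [LinearMap.mulLeft_apply] using this)
      exact h2
    exact ⟨⟨s, t, ht, hts⟩, rfl⟩

open MvPolynomial in
lemma totalDegree_det_le {F σ ι : Type*} [Field F] [Fintype ι] [DecidableEq ι]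
    (M : Matrix ι ι (MvPolynomial σ F)) (h : ∀ i j, (M i j).totalDegree ≤ 1) :
    M.det.totalDegree ≤ Fintype.card ι := by
  rw [Matrix.det_apply]
  refine (MvPolynomial.totalDegree_finset_sum _ _).trans (Finset.sup_le fun g _ => ?_)
  refine (MvPolynomial.totalDegree_smul_le _ _).trans ?_
  refine (MvPolynomial.totalDegree_finset_prod _ _).trans ?_
  calc ∑ i, (M (g i) i).totalDegree ≤ ∑ _i : ι, 1 :=
      Finset.sum_le_sum fun i _ => h _ _
    _ = Fintype.card ι := by simp

section Aux

variable {F K : Type*} [Field F] [Field K] [Algebra F K]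
  [Fintype (K ≃ₐ[F] K)] {n : ℕ}

noncomputable def monAlgBasis (F K : Type*) [Field F] [Field K] [Algebra F K]
    [Fintype (K ≃ₐ[F] K)] :
    Module.Basis (K ≃ₐ[F] K) F (MonoidAlgebra F (K ≃ₐ[F] K)) :=
  MonoidAlgebra.basis (K ≃ₐ[F] K) F

@[simp] lemma monAlgBasis_apply (g : K ≃ₐ[F] K) :
    monAlgBasis F K g = MonoidAlgebra.single g 1 := MonoidAlgebra.basis_apply _ _

noncomputable def Smap (b : Module.Basis (Fin n) F K) (α : K) :
    (Fin n → F) →ₗ[F] MonoidAlgebra F (K ≃ₐ[F] K) where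
  toFun x := ∑ g : K ≃ₐ[F] K, MonoidAlgebra.single g ((b.constr F x) (g α))
  map_add' x y := by
    simp only [map_add, LinearMap.add_apply, MonoidAlgebra.single_add]
    rw [Finset.sum_add_distrib]
  map_smul' c x := by
    simp only [map_smul, LinearMap.smul_apply, RingHom.id_apply,
      ← MonoidAlgebra.smul_single, ← Finset.smul_sum]

end Aux

section Aux2

variable {F K : Type*} [Field F] [Field K] [Algebra F K]
  [Fintype (K ≃ₐ[F] K)] [DecidableEq (K ≃ₐ[F] K)] {n : ℕ}

noncomputable def entryMap (b : Module.Basis (Fin n) F K) (α : K) (k h : K ≃ₐ[F] K) :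
    (Fin n → F) →ₗ[F] F where
  toFun x := LinearMap.toMatrix (monAlgBasis F K) (monAlgBasis F K)
      (LinearMap.mul F (MonoidAlgebra F (K ≃ₐ[F] K)) (Smap b α x)) k h
  map_add' x y := by simp [map_add, Matrix.add_apply]
  map_smul' c x := by simp [map_smul, Matrix.smul_apply]

noncomputable def polyMat (b : Module.Basis (Fin n) F K) (α : K) :
    Matrix (K ≃ₐ[F] K) (K ≃ₐ[F] K) (MvPolynomial (Fin n) F) :=
  fun k h => ∑ i : Fin n,
    MvPolynomial.C (entryMap b α k h (Pi.single i 1)) * MvPolynomial.X i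

noncomputable def detPoly (b : Module.Basis (Fin n) F K) (α : K) :
    MvPolynomial (Fin n) F :=
  (polyMat b α).det

lemma eval_polyMat (b : Module.Basis (Fin n) F K) (α : K) (k h : K ≃ₐ[F] K)
    (x : Fin n → F) :
    MvPolynomial.eval x (polyMat b α k h) = entryMap b α k h x := by
  have hx : entryMap b α k h x
      = ∑ i : Fin n, x i * entryMap b α k h (Pi.single i 1) := by
    conv_lhs => rw [← Finset.univ_sum_single x]
    rw [map_sum]
    refine Finset.sum_congr rfl fun i _ => ?_
    have h1 : Pi.single i (x i) = x i • Pi.single (M := fun _ : Fin n => F) i 1 := by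
      rw [← Pi.single_smul, smul_eq_mul, mul_one]
    rw [h1, map_smul, smul_eq_mul]
  rw [hx, polyMat, map_sum]
  refine Finset.sum_congr rfl fun i _ => ?_
  rw [map_mul, MvPolynomial.eval_C, MvPolynomial.eval_X, mul_comm]

lemma eval_detPoly (b : Module.Basis (Fin n) F K) (α : K) (x : Fin n → F) :
    MvPolynomial.eval x (detPoly b α)
      = (LinearMap.toMatrix (monAlgBasis F K) (monAlgBasis F K)
          (LinearMap.mulLeft F (Smap b α x))).det := by
  rw [detPoly, RingHom.map_det]
  congr 1
  ext k h
  rw [RingHom.mapMatrix_apply, Matrix.map_apply, eval_polyMat]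
  have hm : LinearMap.mulLeft F (Smap b α x)
      = LinearMap.mul F (MonoidAlgebra F (K ≃ₐ[F] K)) (Smap b α x) :=
    LinearMap.ext fun z => by
      rw [LinearMap.mulLeft_apply, LinearMap.mul_apply']
  rw [hm]
  rfl

lemma isUnit_Smap_iff (b : Module.Basis (Fin n) F K) (α : K) (x : Fin n → F) :
    IsUnit (Smap b α x) ↔ MvPolynomial.eval x (detPoly b α) ≠ 0 := by
  rw [eval_detPoly]
  exact isUnit_iff_det_ne_zero (monAlgBasis F K) (Smap b α x)

lemma totalDegree_detPoly_le (b : Module.Basis (Fin n) F K) (α : K) :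
    (detPoly b α).totalDegree ≤ Fintype.card (K ≃ₐ[F] K) := by
  refine totalDegree_det_le _ fun k h => ?_
  refine (MvPolynomial.totalDegree_finset_sum _ _).trans (Finset.sup_le fun i _ => ?_)
  refine (MvPolynomial.totalDegree_mul _ _).trans ?_
  simp [MvPolynomial.totalDegree_C, MvPolynomial.totalDegree_X]

end Aux2

section Aux3

variable {F K : Type*} [Field F] [Field K] [Algebra F K]
  [Fintype (K ≃ₐ[F] K)] [DecidableEq (K ≃ₐ[F] K)] {n : ℕ}

lemma detPoly_ne_zero (b : Module.Basis (Fin n) F K) (α : K)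
    (hα : ∃ bb : Module.Basis (K ≃ₐ[F] K) F K, ∀ g : K ≃ₐ[F] K, bb g = g α) :
    detPoly b α ≠ 0 := by
  obtain ⟨bb, hbb⟩ := hα
  set x₁ : Fin n → F := fun i => bb.coord 1 (b i) with hx₁
  have hconstr : b.constr F x₁ = bb.coord 1 :=
    b.ext fun i => by rw [Module.Basis.constr_basis]
  have hS : Smap b α x₁ = 1 := by
    show (∑ g : K ≃ₐ[F] K, MonoidAlgebra.single g ((b.constr F x₁) (g α))) = 1
    rw [hconstr]
    have hcoord : ∀ g : K ≃ₐ[F] K, (bb.coord 1) (g α) = if g = 1 then 1 else 0 := by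
      intro g
      rw [← hbb g, Module.Basis.coord_apply, Module.Basis.repr_self]
      exact Finsupp.single_apply
    rw [Finset.sum_congr rfl fun g _ => by rw [hcoord g]]
    rw [Finset.sum_eq_single 1 (fun g _ hg => by simp [hg]) (by simp)]
    simp [MonoidAlgebra.one_def]
  intro h
  have hu : IsUnit (Smap b α x₁) := hS ▸ isUnit_one
  exact (isUnit_Smap_iff b α x₁).mp hu (by rw [h, map_zero])

end Aux3

open Classical in
theorem card_bad_projections_le
    (F K : Type*) [Field F] [Field K] [CharZero F] [Algebra F K]
    [FiniteDimensional F K] [IsGalois F K]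
    [Fintype (K ≃ₐ[F] K)]
    (n : ℕ) (b : Module.Basis (Fin n) F K) (α : K)
    (hα : ∃ bb : Module.Basis (K ≃ₐ[F] K) F K, ∀ g : K ≃ₐ[F] K, bb g = g α)
    (X : Finset F) :
    ((Fintype.piFinset fun _ : Fin n => X).filter fun x =>
        ¬ IsUnit (∑ g : K ≃ₐ[F] K,
            MonoidAlgebra.single g ((b.constr F x) (g α)))).card
      ≤ n * X.card ^ (n - 1) := by
  have hcard : Fintype.card (K ≃ₐ[F] K) = n := by
    refine (Nat.card_eq_fintype_card.symm.trans (IsGalois.card_aut_eq_finrank F K)).trans ?_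
    rw [Module.finrank_eq_card_basis b, Fintype.card_fin]
  have hn : 0 < n := by
    rw [← hcard]
    exact Fintype.card_pos
  have hne : detPoly b α ≠ 0 := detPoly_ne_zero b α hα
  have hfilter : ((Fintype.piFinset fun _ : Fin n => X).filter fun x =>
        ¬ IsUnit (∑ g : K ≃ₐ[F] K,
            MonoidAlgebra.single g ((b.constr F x) (g α))))
      = ((Fintype.piFinset fun _ : Fin n => X).filter fun x =>
          MvPolynomial.eval x (detPoly b α) = 0) := by
    refine Finset.filter_congr fun x _ => ?_
    have h1 : (∑ g : K ≃ₐ[F] K,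
        MonoidAlgebra.single g ((b.constr F x) (g α))) = Smap b α x := rfl
    rw [h1]
    exact (isUnit_Smap_iff b α x).not.trans not_not
  rw [hfilter]
  rcases Nat.eq_zero_or_pos X.card with hX | hX
  · calc ((Fintype.piFinset fun _ : Fin n => X).filter fun x =>
          MvPolynomial.eval x (detPoly b α) = 0).card
        ≤ (Fintype.piFinset fun _ : Fin n => X).card := Finset.card_filter_le _ _
      _ = X.card ^ n := by simp [Fintype.card_piFinset, Finset.prod_const]
      _ = 0 := by rw [hX, zero_pow hn.ne']
      _ ≤ _ := Nat.zero_le _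
  · have hD : (detPoly b α).totalDegree ≤ n :=
      (totalDegree_detPoly_le b α).trans hcard.le
    refine Nat.le_of_mul_le_mul_right ?_ hX
    calc ((Fintype.piFinset fun _ : Fin n => X).filter fun x =>
          MvPolynomial.eval x (detPoly b α) = 0).card * X.card
        ≤ (detPoly b α).totalDegree * X.card ^ n := schwartz_zippel n (detPoly b α) hne X
      _ ≤ n * X.card ^ n := Nat.mul_le_mul_right _ hD
      _ = n * X.card ^ (n - 1) * X.card := by
          rw [mul_assoc, ← pow_succ, Nat.sub_add_cancel hn]
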